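/- arXiv:1411.2755 — 5 statements merged into one kernel-verified Lean document; each statement's English description precedes it below -/
import Mathlib

section
/- Let Ḡ be the CDAG built from a DAG G on {v_1,...,v_p}, and let G̲ be the graph obtained from Ḡ by adding a new vertex z together with edges z → w_i for every i. Then for all disjoint subsets A, B, C of the vertices of Ḡ, A and B are c-separated by C in Ḡ if and only if A and B are d-separated by C in G̲. -/
open Relation

/-- Ancestors of a set `S` under directed edge relation `D`:
vertices with a (possibly trivial) directed path to some vertex of `S`. -/
def Ancestors {a : Type*} (D : a -> a -> Prop) (S : Set a) : Set a :=
  {u | exists s, s ∈ S ∧ Relation.ReflTransGen D u s}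

/-- `C` separates `A` and `B` in the undirected graph `U`. -/
def Separates {a : Type*} (U : SimpleGraph a) (A B C : Set a) : Prop :=
  ∀ x, x ∈ A → ∀ y, y ∈ B → ∀ p : U.Walk x y, ∃ c, c ∈ C ∧ c ∈ p.support

/-- Skeleton of the moralisation of the subgraph of `D` induced on `T`. -/
def MoralSkel {a : Type*} (D : a -> a -> Prop) (T : Set a) : SimpleGraph a :=
  SimpleGraph.fromRel (fun x y =>
    x ∈ T ∧ y ∈ T ∧ (D x y ∨ D y x ∨ ∃ z, z ∈ T ∧ D x z ∧ D y z))

/-- Classical d-separation in the DAG with edge relation `D`. -/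
def DSep {a : Type*} (D : a -> a -> Prop) (A B C : Set a) : Prop :=
  Separates (MoralSkel D (Ancestors D (A ∪ B ∪ C))) A B C

/-- Nodes of a CDAG: `Sum.inl i` is the primary node `v i`,
`Sum.inr i` is the secondary node `w i`. -/
abbrev CNode (p : ℕ) := Fin p ⊕ Fin p

/-- Edge relation of the CDAG built from a DAG `E` on primary nodes:
the edges of `E` together with `w i → v i`. -/
def cdagEdge {p : ℕ} (E : Fin p -> Fin p -> Prop) : CNode p -> CNode p -> Prop
  | Sum.inl i, Sum.inl j => E i j
  | Sum.inr i, Sum.inl j => i = j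
  | _, _ => False

/-- The undirected graph used for c-separation, given ancestral set `T`:
moralised skeleton plus an edge between every pair of secondary nodes present. -/
def CSepGraph {p : ℕ} (E : Fin p -> Fin p -> Prop) (T : Set (CNode p)) :
    SimpleGraph (CNode p) :=
  SimpleGraph.fromRel (fun x y =>
    x ∈ T ∧ y ∈ T ∧ (cdagEdge E x y ∨ cdagEdge E y x ∨
      (∃ z, z ∈ T ∧ cdagEdge E x z ∧ cdagEdge E y z) ∨
      (x.isRight = true ∧ y.isRight = true)))

/-- c-separation of `A` and `B` by `C` in the CDAG built from `E`. -/
def CSep {p : ℕ} (E : Fin p -> Fin p -> Prop) (A B C : Set (CNode p)) : Prop :=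
  Separates (CSepGraph E (Ancestors (cdagEdge E) (A ∪ B ∪ C))) A B C

/-- The extension of the CDAG by a vertex `z` with edges to all secondary nodes. -/
def extEdge {p : ℕ} (E : Fin p -> Fin p -> Prop) :
    (CNode p ⊕ Unit) -> (CNode p ⊕ Unit) -> Prop
  | Sum.inl x, Sum.inl y => cdagEdge E x y
  | Sum.inr _, Sum.inl (Sum.inr _) => True
  | _, _ => False

section general
variable {a : Type*}

lemma rtg_to_walk (U : SimpleGraph a) (C : Set a) {x y : a}
    (h : Relation.ReflTransGen (fun u v => U.Adj u v ∧ u ∉ C ∧ v ∉ C) x y)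
    (hx : x ∉ C) : ∃ w : U.Walk x y, ∀ v ∈ w.support, v ∉ C := by
  induction h with
  | refl => exact ⟨SimpleGraph.Walk.nil, by simpa using hx⟩
  | @tail b c h1 h2 ih =>
    obtain ⟨w, hw⟩ := ih
    refine ⟨w.concat h2.1, ?_⟩
    intro v hv
    rw [SimpleGraph.Walk.support_concat, List.mem_append] at hv
    rcases hv with h | h
    · exact hw v h
    · simp only [List.mem_singleton] at h; subst h; exact h2.2.2

lemma walk_to_rtg (U : SimpleGraph a) (C : Set a) :
    ∀ {x y : a} (w : U.Walk x y), (∀ v ∈ w.support, v ∉ C) →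
    Relation.ReflTransGen (fun u v => U.Adj u v ∧ u ∉ C ∧ v ∉ C) x y := by
  intro x y w
  induction w with
  | nil => intro _; exact Relation.ReflTransGen.refl
  | @cons u v t h w ih =>
    intro hw
    refine Relation.ReflTransGen.head ⟨h, ?_, ?_⟩ (ih ?_)
    · exact hw u (by simp)
    · exact hw v (by simp)
    · intro s hs; exact hw s (by simp [hs])

lemma separates_iff (U : SimpleGraph a) (A B C : Set a) (hAC : Disjoint A C) :
    Separates U A B C ↔ ∀ x ∈ A, ∀ y ∈ B, ¬ Relation.ReflTransGen
      (fun u v => U.Adj u v ∧ u ∉ C ∧ v ∉ C) x y := by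
  constructor
  · intro hsep x hx y hy h
    obtain ⟨w, hw⟩ := rtg_to_walk U C h (Set.disjoint_left.mp hAC hx)
    obtain ⟨c, hcC, hcs⟩ := hsep x hx y hy w
    exact hw c hcs hcC
  · intro h x hx y hy w
    by_contra hc
    push_neg at hc
    exact h x hx y hy (walk_to_rtg U C w (fun v hv hvC => hc v hvC hv))

end general

section cdag
variable {p : ℕ} (E : Fin p → Fin p → Prop)

lemma ext_rtg_inl {x : CNode p} {m : CNode p ⊕ Unit}
    (h : Relation.ReflTransGen (extEdge E) (Sum.inl x) m) :
    ∃ y, m = Sum.inl y ∧ Relation.ReflTransGen (cdagEdge E) x y := by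
  induction h with
  | refl => exact ⟨x, rfl, Relation.ReflTransGen.refl⟩
  | @tail b c h1 h2 ih =>
    obtain ⟨y, rfl, hy⟩ := ih
    cases c with
    | inl w => exact ⟨w, rfl, hy.tail h2⟩
    | inr u => simp [extEdge] at h2

lemma mem_T'_inl (S : Set (CNode p)) (x : CNode p) :
    Sum.inl x ∈ Ancestors (extEdge E) (Sum.inl '' S) ↔ x ∈ Ancestors (cdagEdge E) S := by
  constructor
  · rintro ⟨s', ⟨s, hs, rfl⟩, h⟩
    obtain ⟨y, hy, hr⟩ := ext_rtg_inl E h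
    obtain rfl : s = y := Sum.inl_injective hy
    exact ⟨s, hs, hr⟩
  · rintro ⟨s, hs, h⟩
    exact ⟨Sum.inl s, ⟨s, hs, rfl⟩,
      Relation.ReflTransGen.lift (p := extEdge E) Sum.inl (fun a b hab => hab) x s h⟩

lemma z_mem_T' (S : Set (CNode p)) (hS : S.Nonempty) :
    (Sum.inr () : CNode p ⊕ Unit) ∈ Ancestors (extEdge E) (Sum.inl '' S) := by
  obtain ⟨s, hs⟩ := hS
  refine ⟨Sum.inl s, ⟨s, hs, rfl⟩, ?_⟩
  cases s with
  | inl j =>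
    exact Relation.ReflTransGen.head (b := Sum.inl (Sum.inr j)) trivial
      (Relation.ReflTransGen.single (show cdagEdge E (Sum.inr j) (Sum.inl j) from rfl))
  | inr j => exact Relation.ReflTransGen.single trivial

end cdag
section cdag2
variable {p : ℕ} (E : Fin p → Fin p → Prop)

/-- Transfer a moral-skeleton adjacency between primary-copies down to the CSep graph. -/
lemma csep_adj_of_moral_adj (S : Set (CNode p)) {u v : CNode p}
    (h : (MoralSkel (extEdge E) (Ancestors (extEdge E) (Sum.inl '' S))).Adj
      (Sum.inl u) (Sum.inl v)) :
    (CSepGraph E (Ancestors (cdagEdge E) S)).Adj u v := by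
  simp only [MoralSkel, SimpleGraph.fromRel_adj] at h
  simp only [CSepGraph, SimpleGraph.fromRel_adj]
  obtain ⟨hne, h⟩ := h
  refine ⟨fun e => hne (by rw [e]), ?_⟩
  have key : ∀ a b : CNode p,
      (Sum.inl a ∈ Ancestors (extEdge E) (Sum.inl '' S) ∧
        Sum.inl b ∈ Ancestors (extEdge E) (Sum.inl '' S) ∧
        (extEdge E (Sum.inl a) (Sum.inl b) ∨ extEdge E (Sum.inl b) (Sum.inl a) ∨
          ∃ z, z ∈ Ancestors (extEdge E) (Sum.inl '' S) ∧
            extEdge E (Sum.inl a) z ∧ extEdge E (Sum.inl b) z)) →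
      (a ∈ Ancestors (cdagEdge E) S ∧ b ∈ Ancestors (cdagEdge E) S ∧
        (cdagEdge E a b ∨ cdagEdge E b a ∨
          (∃ z, z ∈ Ancestors (cdagEdge E) S ∧ cdagEdge E a z ∧ cdagEdge E b z) ∨
          ((a : CNode p).isRight = true ∧ (b : CNode p).isRight = true))) := by
    rintro a b ⟨ha, hb, hd⟩
    refine ⟨(mem_T'_inl E S a).mp ha, (mem_T'_inl E S b).mp hb, ?_⟩
    rcases hd with h1 | h1 | ⟨z, hz, h1, h2⟩
    · exact Or.inl h1
    · exact Or.inr (Or.inl h1)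
    · cases z with
      | inl w => exact Or.inr (Or.inr (Or.inl ⟨w, (mem_T'_inl E S w).mp hz, h1, h2⟩))
      | inr t => simp [extEdge] at h1
  rcases h with h | h
  · exact Or.inl (key u v h)
  · exact Or.inr (key v u h)

/-- Analysis of adjacency between a primary-copy node and `z` in the moral skeleton. -/
lemma secondary_of_adj_z (S : Set (CNode p)) {u : CNode p}
    (h : (MoralSkel (extEdge E) (Ancestors (extEdge E) (Sum.inl '' S))).Adj
      (Sum.inl u) (Sum.inr ())) :
    (∃ i, u = Sum.inr i) ∧ u ∈ Ancestors (cdagEdge E) S := by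
  simp only [MoralSkel, SimpleGraph.fromRel_adj] at h
  obtain ⟨-, h⟩ := h
  have main : ∀ (hu : Sum.inl u ∈ Ancestors (extEdge E) (Sum.inl '' S))
      (hd : extEdge E (Sum.inl u) (Sum.inr ()) ∨ extEdge E (Sum.inr ()) (Sum.inl u) ∨
        ∃ z, z ∈ Ancestors (extEdge E) (Sum.inl '' S) ∧
          extEdge E (Sum.inl u) z ∧ extEdge E (Sum.inr ()) z),
      (∃ i, u = Sum.inr i) ∧ u ∈ Ancestors (cdagEdge E) S := by
    intro hu hd
    refine ⟨?_, (mem_T'_inl E S u).mp hu⟩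
    rcases hd with h1 | h1 | ⟨z, hz, h1, h2⟩
    · simp [extEdge] at h1
    · cases u with
      | inl j => simp [extEdge] at h1
      | inr i => exact ⟨i, rfl⟩
    · cases z with
      | inl w =>
        cases w with
        | inl j => simp [extEdge] at h2
        | inr j => cases u <;> simp [extEdge, cdagEdge] at h1
      | inr t => simp [extEdge] at h1
  rcases h with ⟨hu, _, hd⟩ | ⟨_, hu, hd⟩
  · exact main hu hd
  · exact main hu (by tauto)

lemma z_not_mem_image (C : Set (CNode p)) :
    (Sum.inr () : CNode p ⊕ Unit) ∉ Sum.inl '' C := by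
  rintro ⟨c, -, h⟩; cases h

lemma inl_mem_image_iff (C : Set (CNode p)) (u : CNode p) :
    (Sum.inl u : CNode p ⊕ Unit) ∈ Sum.inl '' C ↔ u ∈ C :=
  Sum.inl_injective.mem_set_image

end cdag2
section cdag3
variable {p : ℕ} (E : Fin p → Fin p → Prop)

lemma lift_adj (S : Set (CNode p)) {u v : CNode p}
    (h : (CSepGraph E (Ancestors (cdagEdge E) S)).Adj u v) :
    (MoralSkel (extEdge E) (Ancestors (extEdge E) (Sum.inl '' S))).Adj
        (Sum.inl u) (Sum.inl v) ∨
      ((MoralSkel (extEdge E) (Ancestors (extEdge E) (Sum.inl '' S))).Adj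
        (Sum.inl u) (Sum.inr ()) ∧
       (MoralSkel (extEdge E) (Ancestors (extEdge E) (Sum.inl '' S))).Adj
        (Sum.inr ()) (Sum.inl v)) := by
  simp only [CSepGraph, SimpleGraph.fromRel_adj] at h
  obtain ⟨hne, h⟩ := h
  -- z is in the ancestral set as soon as T (hence S) is nonempty
  have hz : ∀ w : CNode p, w ∈ Ancestors (cdagEdge E) S →
      (Sum.inr () : CNode p ⊕ Unit) ∈ Ancestors (extEdge E) (Sum.inl '' S) := by
    rintro w ⟨s, hs, -⟩
    exact z_mem_T' E S ⟨s, hs⟩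
  have key : ∀ a b : CNode p,
      (a ∈ Ancestors (cdagEdge E) S ∧ b ∈ Ancestors (cdagEdge E) S ∧
        (cdagEdge E a b ∨ cdagEdge E b a ∨
          (∃ z, z ∈ Ancestors (cdagEdge E) S ∧ cdagEdge E a z ∧ cdagEdge E b z) ∨
          ((a : CNode p).isRight = true ∧ (b : CNode p).isRight = true))) →
      (Sum.inl a ∈ Ancestors (extEdge E) (Sum.inl '' S) ∧
        Sum.inl b ∈ Ancestors (extEdge E) (Sum.inl '' S) ∧
        (extEdge E (Sum.inl a) (Sum.inl b) ∨ extEdge E (Sum.inl b) (Sum.inl a) ∨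
          ∃ z, z ∈ Ancestors (extEdge E) (Sum.inl '' S) ∧
            extEdge E (Sum.inl a) z ∧ extEdge E (Sum.inl b) z)) ∨
      (a.isRight = true ∧ b.isRight = true ∧
        a ∈ Ancestors (cdagEdge E) S ∧ b ∈ Ancestors (cdagEdge E) S) := by
    rintro a b ⟨ha, hb, hd⟩
    rcases hd with h1 | h1 | ⟨w, hw, h1, h2⟩ | h1
    · exact Or.inl ⟨(mem_T'_inl E S a).mpr ha, (mem_T'_inl E S b).mpr hb, Or.inl h1⟩
    · exact Or.inl ⟨(mem_T'_inl E S a).mpr ha, (mem_T'_inl E S b).mpr hb,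
        Or.inr (Or.inl h1)⟩
    · exact Or.inl ⟨(mem_T'_inl E S a).mpr ha, (mem_T'_inl E S b).mpr hb,
        Or.inr (Or.inr ⟨Sum.inl w, (mem_T'_inl E S w).mpr hw, h1, h2⟩)⟩
    · exact Or.inr ⟨h1.1, h1.2, ha, hb⟩
  -- adjacency to z for a secondary node in T
  have adjz : ∀ a : CNode p, a.isRight = true → a ∈ Ancestors (cdagEdge E) S →
      (MoralSkel (extEdge E) (Ancestors (extEdge E) (Sum.inl '' S))).Adj
        (Sum.inl a) (Sum.inr ()) := by
    intro a hra ha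
    obtain ⟨i, rfl⟩ : ∃ i, a = Sum.inr i := by
      cases a with
      | inl j => simp at hra
      | inr i => exact ⟨i, rfl⟩
    simp only [MoralSkel, SimpleGraph.fromRel_adj]
    refine ⟨by simp, Or.inr ⟨hz _ ha, (mem_T'_inl E S _).mpr ha, Or.inl trivial⟩⟩
  rcases h with h | h
  · rcases key u v h with hm | ⟨h1, h2, hu, hv⟩
    · exact Or.inl (by
        simp only [MoralSkel, SimpleGraph.fromRel_adj]
        exact ⟨by simpa using hne, Or.inl hm⟩)
    · exact Or.inr ⟨adjz u h1 hu, (adjz v h2 hv).symm⟩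
  · rcases key v u h with hm | ⟨h1, h2, hv, hu⟩
    · exact Or.inl (by
        simp only [MoralSkel, SimpleGraph.fromRel_adj]
        exact ⟨by simpa using hne, Or.inr hm⟩)
    · exact Or.inr ⟨adjz u h2 hu, (adjz v h1 hv).symm⟩

lemma rtg_lift (S C : Set (CNode p)) {x y : CNode p}
    (h : Relation.ReflTransGen (fun u v =>
      (CSepGraph E (Ancestors (cdagEdge E) S)).Adj u v ∧ u ∉ C ∧ v ∉ C) x y) :
    Relation.ReflTransGen (fun u v =>
      (MoralSkel (extEdge E) (Ancestors (extEdge E) (Sum.inl '' S))).Adj u v ∧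
        u ∉ Sum.inl '' C ∧ v ∉ Sum.inl '' C) (Sum.inl x) (Sum.inl y) := by
  induction h with
  | refl => exact Relation.ReflTransGen.refl
  | @tail b c h1 h2 ih =>
    obtain ⟨hadj, hbC, hcC⟩ := h2
    have hbC' := (inl_mem_image_iff C b).not.mpr hbC
    have hcC' := (inl_mem_image_iff C c).not.mpr hcC
    rcases lift_adj E S hadj with hm | ⟨h1', h2'⟩
    · exact ih.tail ⟨hm, hbC', hcC'⟩
    · exact (ih.tail ⟨h1', hbC', z_not_mem_image C⟩).tail
        ⟨h2', z_not_mem_image C, hcC'⟩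

lemma rtg_contract (S C : Set (CNode p)) {x : CNode p} {m : CNode p ⊕ Unit}
    (h : Relation.ReflTransGen (fun u v =>
      (MoralSkel (extEdge E) (Ancestors (extEdge E) (Sum.inl '' S))).Adj u v ∧
        u ∉ Sum.inl '' C ∧ v ∉ Sum.inl '' C) (Sum.inl x) m) :
    (∀ y, m = Sum.inl y → Relation.ReflTransGen (fun u v =>
      (CSepGraph E (Ancestors (cdagEdge E) S)).Adj u v ∧ u ∉ C ∧ v ∉ C) x y) ∧
    (m = Sum.inr () → ∃ i : Fin p, Relation.ReflTransGen (fun u v =>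
      (CSepGraph E (Ancestors (cdagEdge E) S)).Adj u v ∧ u ∉ C ∧ v ∉ C) x (Sum.inr i) ∧
      (Sum.inr i : CNode p) ∈ Ancestors (cdagEdge E) S ∧ (Sum.inr i : CNode p) ∉ C) := by
  induction h with
  | refl =>
    refine ⟨?_, by simp⟩
    rintro y hy
    obtain rfl : x = y := Sum.inl_injective hy
    exact Relation.ReflTransGen.refl
  | @tail b c h1 h2 ih =>
    obtain ⟨hadj, hbC, hcC⟩ := h2
    cases b with
    | inl u =>
      cases c with
      | inl v =>
        refine ⟨?_, by simp⟩
        rintro y hy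
        obtain rfl : v = y := Sum.inl_injective hy
        exact (ih.1 u rfl).tail ⟨csep_adj_of_moral_adj E S hadj,
          (inl_mem_image_iff C u).not.mp hbC, (inl_mem_image_iff C v).not.mp hcC⟩
      | inr t =>
        refine ⟨by rintro y ⟨⟩, ?_⟩
        intro _
        obtain ⟨⟨i, rfl⟩, hu⟩ := secondary_of_adj_z E S hadj
        exact ⟨i, ih.1 _ rfl, hu, (inl_mem_image_iff C _).not.mp hbC⟩
    | inr t =>
      cases c with
      | inl v =>
        refine ⟨?_, by simp⟩
        rintro y hy
        obtain rfl : v = y := Sum.inl_injective hy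
        cases t
        obtain ⟨⟨j, rfl⟩, hv⟩ := secondary_of_adj_z E S hadj.symm
        obtain ⟨i, hri, hTi, hCi⟩ := ih.2 rfl
        have hvC : (Sum.inr j : CNode p) ∉ C := (inl_mem_image_iff C _).not.mp hcC
        by_cases hij : i = j
        · exact hij ▸ hri
        · refine hri.tail ⟨?_, hCi, hvC⟩
          simp only [CSepGraph, SimpleGraph.fromRel_adj]
          exact ⟨by simpa using hij, Or.inl ⟨hTi, hv,
            Or.inr (Or.inr (Or.inr ⟨rfl, rfl⟩))⟩⟩
      | inr t' =>
        cases t; cases t'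
        exact absurd hadj (MoralSkel (extEdge E) _).irrefl
end cdag3
theorem csep_iff_dsep_extended {p : ℕ} (E : Fin p -> Fin p -> Prop)
    (hacyc : ∀ v, ¬ Relation.TransGen E v v) (A B C : Set (CNode p))
    (hAB : Disjoint A B) (hAC : Disjoint A C) (hBC : Disjoint B C) :
    CSep E A B C ↔
      DSep (extEdge E) (Sum.inl '' A) (Sum.inl '' B) (Sum.inl '' C) := by
  have hAC' : Disjoint (Sum.inl '' A : Set (CNode p ⊕ Unit)) (Sum.inl '' C) := by
    rw [Set.disjoint_left]
    rintro _ ⟨a, ha, rfl⟩ ⟨c, hc, hce⟩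
    obtain rfl : c = a := Sum.inl_injective hce
    exact Set.disjoint_left.mp hAC ha hc
  rw [CSep, DSep, separates_iff _ _ _ _ hAC, separates_iff _ _ _ _ hAC']
  have himg : (Sum.inl '' A ∪ Sum.inl '' B ∪ Sum.inl '' C : Set (CNode p ⊕ Unit))
      = Sum.inl '' (A ∪ B ∪ C) := by
    rw [Set.image_union, Set.image_union]
  rw [himg]
  constructor
  · rintro h _ ⟨x, hx, rfl⟩ _ ⟨y, hy, rfl⟩ hr
    exact h x hx y hy ((rtg_contract E (A ∪ B ∪ C) C hr).1 y rfl)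
  · intro h x hx y hy hr
    exact h _ ⟨x, hx, rfl⟩ _ ⟨y, hy, rfl⟩ (rtg_lift E (A ∪ B ∪ C) C hr)
end

section
/- The independence model induced by c-separation on a CDAG satisfies the decomposition axiom: for disjoint node sets A, B, C, D, if A is c-separated from B ∪ D by C, then A is c-separated from D by C. -/
open Relation

lemma ancestors_mono {a : Type*} (D : a -> a -> Prop) {S S' : Set a} (h : S ⊆ S') :
    Ancestors D S ⊆ Ancestors D S' := by
  rintro u ⟨s, hs, hpath⟩
  exact ⟨s, h hs, hpath⟩

lemma csepGraph_mono {p : ℕ} (E : Fin p -> Fin p -> Prop) {T T' : Set (CNode p)}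
    (h : T ⊆ T') : CSepGraph E T ≤ CSepGraph E T' := by
  intro x y hxy
  rcases hxy with ⟨hne, hrel⟩
  refine ⟨hne, ?_⟩
  rcases hrel with ⟨hx, hy, hc⟩ | ⟨hx, hy, hc⟩
  · exact Or.inl ⟨h hx, h hy, by
      rcases hc with h1 | h1 | ⟨z, hz, h1⟩ | h1
      · exact Or.inl h1
      · exact Or.inr (Or.inl h1)
      · exact Or.inr (Or.inr (Or.inl ⟨z, h hz, h1⟩))
      · exact Or.inr (Or.inr (Or.inr h1))⟩
  · exact Or.inr ⟨h hx, h hy, by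
      rcases hc with h1 | h1 | ⟨z, hz, h1⟩ | h1
      · exact Or.inl h1
      · exact Or.inr (Or.inl h1)
      · exact Or.inr (Or.inr (Or.inl ⟨z, h hz, h1⟩))
      · exact Or.inr (Or.inr (Or.inr h1))⟩

theorem csep_decomposition {p : ℕ} (E : Fin p -> Fin p -> Prop)
    (hacyc : ∀ v, ¬ Relation.TransGen E v v) (A B C D : Set (CNode p))
    (hAB : Disjoint A B) (hAC : Disjoint A C) (hAD : Disjoint A D)
    (hBC : Disjoint B C) (hBD : Disjoint B D) (hCD : Disjoint C D)
    (h : CSep E A (B ∪ D) C) : CSep E A D C := by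
  intro x hx y hy w
  have hsub : Ancestors (cdagEdge E) (A ∪ D ∪ C) ⊆
      Ancestors (cdagEdge E) (A ∪ (B ∪ D) ∪ C) := by
    apply ancestors_mono
    intro u hu
    rcases hu with (hu | hu) | hu
    · exact Or.inl (Or.inl hu)
    · exact Or.inl (Or.inr (Or.inr hu))
    · exact Or.inr hu
  have hle := csepGraph_mono E hsub
  obtain ⟨c, hc, hcsup⟩ := h x hx y (Or.inr hy) (w.mapLe hle)
  refine ⟨c, hc, ?_⟩
  have hs : (w.mapLe hle).support = w.support := by
    simp only [SimpleGraph.Walk.mapLe, SimpleGraph.Walk.support_map]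
    exact List.map_id w.support
  rwa [hs] at hcsup
end

section
/- The independence model induced by c-separation on a CDAG satisfies the contraction axiom: for disjoint node sets A, B, C, D, if A is c-separated from B by C ∪ D and A is c-separated from D by C, then A is c-separated from B ∪ D by C. -/
open Relation

section CSepHelpers

open SimpleGraph

lemma ancestors_trans {a : Type*} {R : a → a → Prop} {S : Set a} {u v : a}
    (h : Relation.ReflTransGen R u v) (hv : v ∈ Ancestors R S) : u ∈ Ancestors R S := by
  obtain ⟨s, hs, hr⟩ := hv
  exact ⟨s, hs, h.trans hr⟩

lemma self_mem_ancestors {a : Type*} {R : a → a → Prop} {S : Set a} {v : a} (hv : v ∈ S) :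
    v ∈ Ancestors R S := ⟨v, hv, Relation.ReflTransGen.refl⟩

lemma exists_first_prefix {V : Type*} {G : SimpleGraph V} (S : Set V) :
    ∀ {x y : V} (p : G.Walk x y), y ∈ S →
      ∃ t, t ∈ S ∧ ∃ q : G.Walk x t, q.support ⊆ p.support ∧
        (∀ v ∈ q.support, v ∈ S → v = t) ∧
        (∀ v ∈ q.support.dropLast, v ∉ S) := by
  intro x y p
  induction p with
  | nil =>
    intro hy
    exact ⟨_, hy, SimpleGraph.Walk.nil, by simp, by simp, by simp⟩
  | @cons u v w h p ih =>
    intro hy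
    by_cases hu : u ∈ S
    · exact ⟨u, hu, SimpleGraph.Walk.nil, by simp, by simp, by simp⟩
    · obtain ⟨t, ht, q, hsub, hS, hdrop⟩ := ih hy
      refine ⟨t, ht, SimpleGraph.Walk.cons h q, ?_, ?_, ?_⟩
      · rw [SimpleGraph.Walk.support_cons, SimpleGraph.Walk.support_cons]
        exact List.cons_subset_cons u hsub
      · intro z hz hzS
        rw [SimpleGraph.Walk.support_cons, List.mem_cons] at hz
        rcases hz with rfl | hz
        · exact absurd hzS hu
        · exact hS z hz hzS
      · intro z hz
        rw [SimpleGraph.Walk.support_cons,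
          List.dropLast_cons_of_ne_nil (SimpleGraph.Walk.support_ne_nil q),
          List.mem_cons] at hz
        rcases hz with rfl | hz
        · exact hu
        · exact hdrop z hz

lemma takeUntil_support_subset_dropLast {V : Type*} [DecidableEq V] {G : SimpleGraph V}
    {x t u : V} (p : G.Walk x t) (hu : u ∈ p.support) (hne : u ≠ t) :
    (p.takeUntil u hu).support ⊆ p.support.dropLast := by
  have hspec := p.take_spec hu
  have hsupp : p.support = (p.takeUntil u hu).support ++ (p.dropUntil u hu).support.tail := by
    conv_lhs => rw [← hspec]
    exact SimpleGraph.Walk.support_append _ _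
  have htail : (p.dropUntil u hu).support.tail ≠ [] := by
    intro h0
    have ht : t ∈ (p.dropUntil u hu).support := SimpleGraph.Walk.end_mem_support _
    rw [SimpleGraph.Walk.support_eq_cons (p.dropUntil u hu), h0, List.mem_singleton] at ht
    exact hne ht.symm
  intro v hv
  rw [hsupp, List.dropLast_append_of_ne_nil htail]
  exact List.mem_append_left _ hv

lemma cdag_irrefl {p : ℕ} {E : Fin p → Fin p → Prop}
    (hacyc : ∀ v, ¬ Relation.TransGen E v v) : ∀ x, ¬ cdagEdge E x x := by
  intro x hx
  cases x with
  | inl i => exact hacyc i (Relation.TransGen.single hx)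
  | inr i => exact hx

lemma walk_of_reflTransGen {p : ℕ} {E : Fin p → Fin p → Prop}
    (hacyc : ∀ v, ¬ Relation.TransGen E v v) (T : Set (CNode p)) {u b : CNode p}
    (h : Relation.ReflTransGen (cdagEdge E) u b)
    (hT : ∀ v, Relation.ReflTransGen (cdagEdge E) v b → v ∈ T) :
    ∃ w : (CSepGraph E T).Walk u b,
      ∀ v ∈ w.support, Relation.ReflTransGen (cdagEdge E) u v := by
  induction h using Relation.ReflTransGen.head_induction_on with
  | refl =>
    refine ⟨SimpleGraph.Walk.nil, ?_⟩
    intro v hv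
    simp only [SimpleGraph.Walk.support_nil, List.mem_singleton] at hv
    subst hv
    exact Relation.ReflTransGen.refl
  | head h' hrt ih =>
    rename_i a c
    obtain ⟨w, hw⟩ := ih
    have hne : a ≠ c := by
      rintro rfl
      exact cdag_irrefl hacyc a h'
    have adj : (CSepGraph E T).Adj a c := by
      unfold CSepGraph
      rw [SimpleGraph.fromRel_adj]
      exact ⟨hne, Or.inl ⟨hT a (Relation.ReflTransGen.head h' hrt), hT c hrt, Or.inl h'⟩⟩
    refine ⟨SimpleGraph.Walk.cons adj w, ?_⟩
    intro v hv
    rw [SimpleGraph.Walk.support_cons, List.mem_cons] at hv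
    rcases hv with rfl | hv
    · exact Relation.ReflTransGen.refl
    · exact Relation.ReflTransGen.head h' (hw v hv)

end CSepHelpers
theorem csep_contraction {p : ℕ} (E : Fin p -> Fin p -> Prop)
    (hacyc : ∀ v, ¬ Relation.TransGen E v v) (A B C D : Set (CNode p))
    (hAB : Disjoint A B) (hAC : Disjoint A C) (hAD : Disjoint A D)
    (hBC : Disjoint B C) (hBD : Disjoint B D) (hCD : Disjoint C D)
    (h1 : CSep E A B (C ∪ D)) (h2 : CSep E A D C) :
    CSep E A (B ∪ D) C := by
  classical
  have hset : A ∪ B ∪ (C ∪ D) = A ∪ (B ∪ D) ∪ C := by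
    ext v; simp only [Set.mem_union]; tauto
  unfold CSep at h1 h2 ⊢
  rw [hset] at h1
  set R := cdagEdge E with hR
  set T1 : Set (CNode p) := Ancestors R (A ∪ (B ∪ D) ∪ C) with hT1
  set T2 : Set (CNode p) := Ancestors R (A ∪ D ∪ C) with hT2
  set G1 := CSepGraph E T1 with hG1
  set G2 := CSepGraph E T2 with hG2
  intro x hx y hy pw
  by_contra hcon
  push_neg at hcon
  obtain ⟨t, htS, σ, hσsub, hσS, hσdrop⟩ := exists_first_prefix (B ∪ D) pw hy
  have hσC : ∀ v ∈ σ.support, v ∉ C := fun v hv hvC => hcon v hvC (hσsub hv)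
  rcases htS with htB | htD
  · -- endpoint in B: σ avoids C ∪ D, contradicting h1
    obtain ⟨c, hcCD, hcsup⟩ := h1 x hx t htB σ
    rcases hcCD with hcC | hcD
    · exact hσC c hcsup hcC
    · have hct : c = t := hσS c hcsup (Or.inr hcD)
      have : t ∈ D := hct ▸ hcD
      exact Set.disjoint_left.mp hBD htB this
  · -- endpoint in D
    have htT2 : t ∈ T2 := self_mem_ancestors (Or.inl (Or.inr htD))
    have routine : ∀ u x', x' ∈ σ.support → x' ≠ t → u ∉ T2 → u ∈ T1 →
        (x' = u ∨ (x' ∈ T1 ∧ R x' u)) → False := by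
      intro u x' hx's hx't huT2 huT1 hlink
      -- u is an ancestor of B only
      have huT1' := huT1
      obtain ⟨s, hs, hrt⟩ := huT1'
      have hsB : s ∈ B := by
        rcases hs with (hsA | hsB | hsD) | hsC
        · exact absurd ⟨s, Or.inl (Or.inl hsA), hrt⟩ huT2
        · exact hsB
        · exact absurd ⟨s, Or.inl (Or.inr hsD), hrt⟩ huT2
        · exact absurd ⟨s, Or.inr hsC, hrt⟩ huT2
      have hTmem : ∀ v, Relation.ReflTransGen R v s → v ∈ T1 :=
        fun v hv => ⟨s, Or.inl (Or.inr (Or.inl hsB)), hv⟩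
      obtain ⟨dw, hdw⟩ := walk_of_reflTransGen hacyc T1 hrt hTmem
      have hdwCD : ∀ v ∈ dw.support, v ∉ C ∪ D := by
        intro v hv hvCD
        apply huT2
        refine ancestors_trans (hdw v hv) (self_mem_ancestors ?_)
        rcases hvCD with h | h
        · exact Or.inr h
        · exact Or.inl (Or.inr h)
      have hpre := takeUntil_support_subset_dropLast σ hx's hx't
      obtain ⟨W, hWsup⟩ : ∃ W : G1.Walk x s, ∀ v ∈ W.support,
          v ∈ (σ.takeUntil x' hx's).support ∨ v ∈ dw.support := by
        rcases hlink with rfl | ⟨hx'T1, hedge⟩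
        · refine ⟨(σ.takeUntil x' hx's).append dw, ?_⟩
          intro v hv
          rwa [SimpleGraph.Walk.mem_support_append_iff] at hv
        · have hne : x' ≠ u := by
            rintro rfl
            exact cdag_irrefl hacyc x' hedge
          have adj : G1.Adj x' u := by
            rw [hG1]
            unfold CSepGraph
            rw [SimpleGraph.fromRel_adj]
            exact ⟨hne, Or.inl ⟨hx'T1, huT1, Or.inl hedge⟩⟩
          refine ⟨(σ.takeUntil x' hx's).append (SimpleGraph.Walk.cons adj dw), ?_⟩
          intro v hv
          rw [SimpleGraph.Walk.mem_support_append_iff] at hv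
          rcases hv with hv | hv
          · exact Or.inl hv
          · rw [SimpleGraph.Walk.support_cons, List.mem_cons] at hv
            rcases hv with rfl | hv
            · exact Or.inl (SimpleGraph.Walk.end_mem_support _)
            · exact Or.inr hv
      obtain ⟨c, hcCD, hcW⟩ := h1 x hx s hsB W
      rcases hWsup c hcW with hcpre | hcdw
      · have hcdrop := hpre hcpre
        rcases hcCD with hcC | hcD
        · exact hσC c (List.dropLast_subset _ hcdrop) hcC
        · exact hσdrop c hcdrop (Or.inr hcD)
      · exact hdwCD c hcdw hcCD
    by_cases hall : ∀ e ∈ σ.edges, e ∈ G2.edgeSet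
    · obtain ⟨c, hcC, hcs⟩ := h2 x hx t htD (σ.transfer G2 hall)
      rw [SimpleGraph.Walk.support_transfer] at hcs
      exact hσC c hcs hcC
    · push_neg at hall
      obtain ⟨e, heσ, heG2⟩ := hall
      induction e using Sym2.ind with
      | _ xe ye =>
        have hadj : G1.Adj xe ye := σ.edges_subset_edgeSet heσ
        have hxs : xe ∈ σ.support := σ.fst_mem_support_of_mem_edges heσ
        have hys : ye ∈ σ.support := σ.snd_mem_support_of_mem_edges heσ
        have hne : xe ≠ ye := hadj.ne
        have hnadj : ¬ G2.Adj xe ye := fun h => heG2 ((G2.mem_edgeSet).mpr h)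
        rw [hG1] at hadj
        rw [hG2] at hnadj
        unfold CSepGraph at hadj hnadj
        rw [SimpleGraph.fromRel_adj] at hadj hnadj
        have hq1 : ¬ (xe ∈ T2 ∧ ye ∈ T2 ∧ (R xe ye ∨ R ye xe ∨
            (∃ z, z ∈ T2 ∧ R xe z ∧ R ye z) ∨
            (Sum.isRight xe = true ∧ Sum.isRight ye = true))) :=
          fun h => hnadj ⟨hne, Or.inl h⟩
        have hq2 : ¬ (ye ∈ T2 ∧ xe ∈ T2 ∧ (R ye xe ∨ R xe ye ∨
            (∃ z, z ∈ T2 ∧ R ye z ∧ R xe z) ∨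
            (Sum.isRight ye = true ∧ Sum.isRight xe = true))) :=
          fun h => hnadj ⟨hne, Or.inr h⟩
        have core : ∀ a b : CNode p, a ∈ σ.support → b ∈ σ.support → a ≠ b →
            (a ∈ T1 ∧ b ∈ T1 ∧ (R a b ∨ R b a ∨
              (∃ z, z ∈ T1 ∧ R a z ∧ R b z) ∨
              (a.isRight = true ∧ b.isRight = true))) →
            ¬ (a ∈ T2 ∧ b ∈ T2 ∧ (R a b ∨ R b a ∨
              (∃ z, z ∈ T2 ∧ R a z ∧ R b z) ∨
              (a.isRight = true ∧ b.isRight = true))) → False := by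
          intro a b has hbs hab hrel1 hn1
          obtain ⟨haT1, hbT1, hd⟩ := hrel1
          by_cases haT2 : a ∈ T2
          · by_cases hbT2 : b ∈ T2
            · rcases hd with h | h | ⟨z, hzT1, haz, hbz⟩ | h
              · exact hn1 ⟨haT2, hbT2, Or.inl h⟩
              · exact hn1 ⟨haT2, hbT2, Or.inr (Or.inl h)⟩
              · by_cases hzT2 : z ∈ T2
                · exact hn1 ⟨haT2, hbT2, Or.inr (Or.inr (Or.inl ⟨z, hzT2, haz, hbz⟩))⟩
                · have hzT1' : z ∈ T1 := hzT1
                  by_cases hat : a = t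
                  · have hbt : b ≠ t := by
                      rintro rfl
                      exact hab hat
                    exact routine z b hbs hbt hzT2 hzT1' (Or.inr ⟨hbT1, hbz⟩)
                  · exact routine z a has hat hzT2 hzT1' (Or.inr ⟨haT1, haz⟩)
              · exact hn1 ⟨haT2, hbT2, Or.inr (Or.inr (Or.inr h))⟩
            · have hbt : b ≠ t := by
                rintro rfl
                exact hbT2 htT2
              exact routine b b hbs hbt hbT2 hbT1 (Or.inl rfl)
          · have hat : a ≠ t := by
              rintro rfl
              exact haT2 htT2
            exact routine a a has hat haT2 haT1 (Or.inl rfl)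
        rcases hadj.2 with h | h
        · exact core xe ye hxs hys hne h hq1
        · exact core ye xe hys hxs hne.symm h hq2
end

section
/- The map from DAGs to CDAG independence models is injective: if G and H are distinct DAGs on vertex set {v_1,...,v_p}, then the independence models M_G and M_H induced by c-separation on the corresponding CDAGs Ḡ and H̄ are distinct, i.e., there exist disjoint node sets A, B, C such that A is c-separated from B by C in exactly one of Ḡ, H̄. -/
open Relation

lemma my_union_univ {p : ℕ} (a b : CNode p) :
    ({a} : Set (CNode p)) ∪ {b} ∪ ({a, b} : Set (CNode p))ᶜ = Set.univ := by
  ext u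
  simp only [Set.mem_union, Set.mem_singleton_iff, Set.mem_compl_iff, Set.mem_insert_iff,
    Set.mem_univ, iff_true]
  tauto

lemma my_ancestors_univ {a : Type*} (D : a → a → Prop) :
    Ancestors D (Set.univ : Set a) = Set.univ :=
  Set.eq_univ_of_forall fun u => ⟨u, Set.mem_univ u, Relation.ReflTransGen.refl⟩

lemma my_adj {p : ℕ} (D : Fin p → Fin p → Prop) (i j : Fin p) (hij : i ≠ j) :
    (CSepGraph D Set.univ).Adj (Sum.inr j) (Sum.inl i) ↔ D i j := by
  constructor
  · intro h
    rw [CSepGraph, SimpleGraph.fromRel_adj] at h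
    obtain ⟨hne, h | h⟩ := h
    · obtain ⟨-, -, h | h | ⟨z, -, hz1, hz2⟩ | ⟨h1, h2⟩⟩ := h
      · exact absurd h (by simp [cdagEdge]; exact fun e => (hij e.symm).elim)
      · exact absurd h (by simp [cdagEdge])
      · match z with
        | Sum.inl k =>
          have : j = k := hz1
          subst this
          exact hz2
        | Sum.inr k => exact absurd hz1 (by simp [cdagEdge])
      · simp at h2
    · obtain ⟨-, -, h | h | ⟨z, -, hz1, hz2⟩ | ⟨h1, h2⟩⟩ := h
      · exact absurd h (by simp [cdagEdge])
      · exact absurd h (by simp [cdagEdge]; exact fun e => (hij e.symm).elim)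
      · match z with
        | Sum.inl k =>
          have : j = k := hz2
          subst this
          exact hz1
        | Sum.inr k => exact absurd hz1 (by simp [cdagEdge])
      · simp at h1
  · intro h
    rw [CSepGraph, SimpleGraph.fromRel_adj]
    refine ⟨by simp, Or.inl ⟨trivial, trivial, Or.inr (Or.inr (Or.inl ⟨Sum.inl j, trivial, ?_, ?_⟩))⟩⟩
    · show j = j; rfl
    · exact h

lemma my_key {p : ℕ} (D : Fin p → Fin p → Prop) (i j : Fin p) (hij : i ≠ j) :
    CSep D {Sum.inr j} {Sum.inl i} (({Sum.inr j, Sum.inl i} : Set (CNode p))ᶜ) ↔ ¬ D i j := by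
  rw [CSep, my_union_univ, my_ancestors_univ]
  constructor
  · intro hsep hD
    have hadj := (my_adj D i j hij).2 hD
    obtain ⟨c, hc, hcs⟩ := hsep _ rfl _ rfl (SimpleGraph.Walk.cons hadj SimpleGraph.Walk.nil)
    simp [SimpleGraph.Walk.support_cons] at hcs
    rcases hcs with h | h <;> subst h <;> simp at hc
  · intro hD x hx y hy w
    subst hx; subst hy
    by_contra hno
    push_neg at hno
    -- every support node is in {inr j, inl i}
    have hsupp : ∀ c ∈ w.support, c = Sum.inr j ∨ c = Sum.inl i := by
      intro c hc
      have := hno c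
      by_contra hcon
      push_neg at hcon
      exact this (by simp [Set.mem_compl_iff, Set.mem_insert_iff]; tauto) hc
    cases w with
    | cons h q =>
      rename_i x
      have hx : x = Sum.inr j ∨ x = Sum.inl i :=
        hsupp x (by simp [SimpleGraph.Walk.support_cons, q.start_mem_support])
      rcases hx with rfl | rfl
      · exact (CSepGraph D Set.univ).irrefl h
      · exact hD ((my_adj D i j hij).1 h)

theorem cdag_independence_model_injective {p : ℕ}
    (E F : Fin p -> Fin p -> Prop)
    (hE : ∀ v, ¬ Relation.TransGen E v v) (hF : ∀ v, ¬ Relation.TransGen F v v)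
    (hne : E ≠ F) :
    ∃ A B C : Set (CNode p), Disjoint A B ∧ Disjoint A C ∧ Disjoint B C ∧
      ¬ (CSep E A B C ↔ CSep F A B C) := by
  have hex : ∃ i j, ¬ (E i j ↔ F i j) := by
    by_contra h
    push_neg at h
    exact hne (funext fun i => funext fun j => propext (h i j))
  obtain ⟨i, j, hij⟩ := hex
  have hne' : i ≠ j := by
    rintro rfl
    exact hij ⟨fun h => absurd (TransGen.single h) (hE i),
               fun h => absurd (TransGen.single h) (hF i)⟩
  refine ⟨{Sum.inr j}, {Sum.inl i}, ({Sum.inr j, Sum.inl i} : Set (CNode p))ᶜ, ?_, ?_, ?_, ?_⟩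
  · simp [Set.disjoint_singleton_left]
  · simp [Set.disjoint_singleton_left]
  · simp [Set.disjoint_singleton_left]
  · rw [my_key E i j hne', my_key F i j hne']
    tauto
end

section
/- Graphical characterisation of edges via c-separation: for a DAG G on {v_1,...,v_p} with associated CDAG Ḡ, the edge v_i → v_j is absent from G if and only if there exists a subset S of pa_G(j) \ {i} such that w_i is c-separated from v_j by {w_j} ∪ {v_k : k ∈ S} in Ḡ. -/
open Relation

lemma rtg_inr_eq {p : ℕ} {E : Fin p -> Fin p -> Prop} {x : CNode p} {k : Fin p}
    (h : Relation.ReflTransGen (cdagEdge E) x (Sum.inr k)) : x = Sum.inr k := by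
  rcases h.cases_tail with h | ⟨c, _, hc⟩
  · exact h.symm
  · cases c <;> exact absurd hc (by simp [cdagEdge])

lemma rtg_inl_inl {p : ℕ} {E : Fin p -> Fin p -> Prop} {m : Fin p} {c : CNode p}
    (h : Relation.ReflTransGen (cdagEdge E) (Sum.inl m) c) :
    ∃ n, c = Sum.inl n ∧ Relation.ReflTransGen E m n := by
  induction h with
  | refl => exact ⟨m, rfl, Relation.ReflTransGen.refl⟩
  | @tail b c hb hstep ih =>
    obtain ⟨n, rfl, hn⟩ := ih
    cases c with
    | inl k => exact ⟨k, rfl, hn.tail hstep⟩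
    | inr k => exact absurd hstep (by simp [cdagEdge])

lemma exists_adj_of_walk {a : Type*} {U : SimpleGraph a} {x y : a} (p : U.Walk x y)
    (hxy : x ≠ y) : ∃ u, U.Adj u y ∧ u ∈ p.support := by
  induction p with
  | nil => exact absurd rfl hxy
  | @cons u v w h q ih =>
    by_cases hvw : v = w
    · subst hvw
      exact ⟨u, h, by simp⟩
    · obtain ⟨z, hz, hmem⟩ := ih hvw
      exact ⟨z, hz, by simp [hmem]⟩

theorem csep_edge_characterisation {p : ℕ} (E : Fin p -> Fin p -> Prop)
    (hacyc : ∀ v, ¬ Relation.TransGen E v v) (i j : Fin p) (hij : i ≠ j) :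
    ¬ E i j ↔
      ∃ S : Set (Fin p), S ⊆ {k | E k j} \ {i} ∧
        CSep E {Sum.inr i} {Sum.inl j} ({Sum.inr j} ∪ Sum.inl '' S) := by
  have hji : ¬ E j j := fun h => hacyc j (Relation.TransGen.single h)
  constructor
  · intro hnE
    refine ⟨{k | E k j}, by intro k hk; exact ⟨hk, fun hki => hnE (hki ▸ hk)⟩, ?_⟩
    set S : Set (Fin p) := {k | E k j}
    set A : Set (CNode p) := {Sum.inr i}
    set B : Set (CNode p) := {Sum.inl j}
    set C : Set (CNode p) := {Sum.inr j} ∪ Sum.inl '' S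
    set T : Set (CNode p) := Ancestors (cdagEdge E) (A ∪ B ∪ C) with hTdef
    -- every primary node in T has a directed path to j
    have hT : ∀ m : Fin p, (Sum.inl m : CNode p) ∈ T → Relation.ReflTransGen E m j := by
      intro m hm
      obtain ⟨c, hc, hr⟩ := hm
      rcases hc with (hc | hc) | hc
      · rcases hc with rfl
        exact absurd (rtg_inr_eq hr) (by simp)
      · rcases hc with rfl
        obtain ⟨n, hn, hmn⟩ := rtg_inl_inl hr
        rcases Sum.inl.inj hn with rfl
        exact hmn
      · rcases hc with rfl | ⟨k, hk, rfl⟩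
        · exact absurd (rtg_inr_eq hr) (by simp)
        · obtain ⟨n, hn, hmn⟩ := rtg_inl_inl hr
          rcases Sum.inl.inj hn with rfl
          exact hmn.tail hk
    have hnoback : ∀ m : Fin p, E j m → (Sum.inl m : CNode p) ∈ T → False := by
      intro m hjm hm
      exact hacyc j (Relation.TransGen.head' hjm (hT m hm))
    -- every neighbour of v_j lies in C
    have hnbr : ∀ u, (CSepGraph E T).Adj u (Sum.inl j) → u ∈ C := by
      intro u hu
      rw [CSepGraph, SimpleGraph.fromRel_adj] at hu
      obtain ⟨hne, h⟩ := hu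
      have h' : u ∈ T ∧ (Sum.inl j : CNode p) ∈ T ∧
          (cdagEdge E u (Sum.inl j) ∨ cdagEdge E (Sum.inl j) u ∨
            (∃ z, z ∈ T ∧ cdagEdge E u z ∧ cdagEdge E (Sum.inl j) z) ∨
            (u.isRight = true ∧ (Sum.inl j : CNode p).isRight = true)) := by
        rcases h with ⟨h1, h2, h3⟩ | ⟨h1, h2, h3⟩
        · refine ⟨h1, h2, ?_⟩
          rcases h3 with h3 | h3 | ⟨z, hz, ha, hb⟩ | ⟨ha, hb⟩
          · exact Or.inl h3
          · exact Or.inr (Or.inl h3)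
          · exact Or.inr (Or.inr (Or.inl ⟨z, hz, ha, hb⟩))
          · exact Or.inr (Or.inr (Or.inr ⟨ha, hb⟩))
        · refine ⟨h2, h1, ?_⟩
          rcases h3 with h3 | h3 | ⟨z, hz, ha, hb⟩ | ⟨ha, hb⟩
          · exact Or.inr (Or.inl h3)
          · exact Or.inl h3
          · exact Or.inr (Or.inr (Or.inl ⟨z, hz, hb, ha⟩))
          · exact Or.inr (Or.inr (Or.inr ⟨hb, ha⟩))
      obtain ⟨huT, _, hcase⟩ := h'
      rcases hcase with hc | hc | ⟨z, hz, hza, hzb⟩ | ⟨_, hsec⟩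
      · cases u with
        | inl k => exact Or.inr ⟨k, hc, rfl⟩
        | inr k =>
          have : k = j := hc
          exact Or.inl (by simp [this])
      · cases u with
        | inl m => exact absurd huT (fun h => hnoback m hc h)
        | inr k => exact absurd hc (by simp [cdagEdge])
      · cases z with
        | inl m => exact absurd hz (fun h => hnoback m hzb h)
        | inr k => exact absurd hzb (by simp [cdagEdge])
      · simp at hsec
    -- conclude separation
    intro x hx y hy pw
    rcases hx with rfl
    rcases hy with rfl
    obtain ⟨u, hu, hmem⟩ := exists_adj_of_walk pw (by simp)
    exact ⟨u, hnbr u hu, hmem⟩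
  · rintro ⟨S, hS, hsep⟩
    intro hE
    set A : Set (CNode p) := {Sum.inr i}
    set B : Set (CNode p) := {Sum.inl j}
    set C : Set (CNode p) := {Sum.inr j} ∪ Sum.inl '' S
    set T : Set (CNode p) := Ancestors (cdagEdge E) (A ∪ B ∪ C) with hTdef
    have hwi : (Sum.inr i : CNode p) ∈ T :=
      ⟨Sum.inr i, Or.inl (Or.inl rfl), Relation.ReflTransGen.refl⟩
    have hvj : (Sum.inl j : CNode p) ∈ T :=
      ⟨Sum.inl j, Or.inl (Or.inr rfl), Relation.ReflTransGen.refl⟩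
    have hvi : (Sum.inl i : CNode p) ∈ T :=
      ⟨Sum.inl j, Or.inl (Or.inr rfl), Relation.ReflTransGen.single hE⟩
    have adj1 : (CSepGraph E T).Adj (Sum.inr i) (Sum.inl i) := by
      rw [CSepGraph, SimpleGraph.fromRel_adj]
      exact ⟨by simp, Or.inl ⟨hwi, hvi, Or.inl rfl⟩⟩
    have adj2 : (CSepGraph E T).Adj (Sum.inl i) (Sum.inl j) := by
      rw [CSepGraph, SimpleGraph.fromRel_adj]
      exact ⟨by simp [hij], Or.inl ⟨hvi, hvj, Or.inl hE⟩⟩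
    obtain ⟨c, hcC, hcs⟩ := hsep (Sum.inr i) rfl (Sum.inl j) rfl
      (SimpleGraph.Walk.cons adj1 (SimpleGraph.Walk.cons adj2 SimpleGraph.Walk.nil))
    simp only [SimpleGraph.Walk.support_cons, SimpleGraph.Walk.support_nil,
      List.mem_cons, List.mem_singleton, List.not_mem_nil, or_false] at hcs
    rcases hcs with rfl | rfl | rfl
    · rcases hcC with hc | ⟨k, _, hk⟩
      · exact hij (Sum.inr.inj hc)
      · exact Sum.inl_ne_inr hk
    · rcases hcC with hc | ⟨k, hk, hk2⟩
      · exact Sum.inl_ne_inr hc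
      · exact (hS hk).2 (Sum.inl.inj hk2 ▸ rfl)
    · rcases hcC with hc | ⟨k, hk, hk2⟩
      · exact Sum.inl_ne_inr (show (Sum.inl j : CNode p) = Sum.inr j from hc)
      · exact hji (Sum.inl.inj hk2 ▸ (hS hk).1)
end
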